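/- Let H(q) = ∑_{σ ∈ {-1,1}^k} e^{q(σ·σ₀)²} with derivative H'. Then for all q ≥ 0, k ≤ H'(q)/H(q) ≤ k², and moreover lim_{q→∞} H'(q)/H(q) = k². -/

import Mathlib

open Finset Real

/-- The real sign of a Boolean spin: `true ↦ 1`, `false ↦ -1`. -/
noncomputable def sgn (b : Bool) : ℝ := if b then 1 else -1

/-- Standard inner product of two spin vectors in `{-1,1}^k`. -/
noncomputable def sdot {k : ℕ} (σ τ : Fin k → Bool) : ℝ := ∑ i, sgn (σ i) * sgn (τ i)

lemma sgn_sq (b : Bool) : sgn b * sgn b = 1 := by cases b <;> simp [sgn]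

lemma sgn_not (b : Bool) : sgn (!b) = - sgn b := by cases b <;> simp [sgn]

lemma abs_sgn (b : Bool) : |sgn b| = 1 := by cases b <;> simp [sgn]

lemma sdot_self {k : ℕ} (σ : Fin k → Bool) : sdot σ σ = k := by
  simp [sdot, sgn_sq]

lemma sdot_sq_le {k : ℕ} (σ τ : Fin k → Bool) : (sdot σ τ) ^ 2 ≤ (k : ℝ) ^ 2 := by
  have h : |sdot σ τ| ≤ (k : ℝ) := by
    calc |sdot σ τ| ≤ ∑ i, |sgn (σ i) * sgn (τ i)| := Finset.abs_sum_le_sum_abs _ _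
    _ = (k : ℝ) := by simp [abs_mul, abs_sgn]
  have := sq_abs (sdot σ τ)
  nlinarith [abs_nonneg (sdot σ τ)]

lemma sum_sgn_pair {k : ℕ} (i j : Fin k) (hij : i ≠ j) :
    ∑ σ : Fin k → Bool, sgn (σ i) * sgn (σ j) = 0 := by
  apply Finset.sum_involution (fun σ _ => Function.update σ i (!σ i))
  · intro σ _
    simp [Function.update_self, Function.update_of_ne (Ne.symm hij), sgn_not]
  · intro σ _ h
    intro heq
    have : Function.update σ i (!σ i) i = σ i := by rw [heq]
    simp [Function.update_self] at this
  · intro σ _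
    funext x
    by_cases hx : x = i
    · subst hx; simp [Function.update_self]
    · simp [Function.update_of_ne hx]
  · intro σ _; exact Finset.mem_univ _

lemma sum_sdot_sq {k : ℕ} (τ : Fin k → Bool) :
    ∑ σ : Fin k → Bool, (sdot σ τ) ^ 2 = (k : ℝ) * 2 ^ k := by
  have expand : ∀ σ : Fin k → Bool, (sdot σ τ) ^ 2
      = ∑ i, ∑ j, (sgn (σ i) * sgn (τ i)) * (sgn (σ j) * sgn (τ j)) := by
    intro σ
    rw [sdot, sq, Finset.sum_mul_sum]
  simp only [expand]
  rw [Finset.sum_comm]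
  have : ∀ i : Fin k, ∑ σ : Fin k → Bool, ∑ j, (sgn (σ i) * sgn (τ i)) * (sgn (σ j) * sgn (τ j))
      = (2 : ℝ) ^ k := by
    intro i
    rw [Finset.sum_comm]
    have hterm : ∀ j : Fin k, ∑ σ : Fin k → Bool, (sgn (σ i) * sgn (τ i)) * (sgn (σ j) * sgn (τ j))
        = if j = i then (2 : ℝ) ^ k else 0 := by
      intro j
      by_cases hji : j = i
      · subst hji
        have : ∀ σ : Fin k → Bool, (sgn (σ j) * sgn (τ j)) * (sgn (σ j) * sgn (τ j)) = 1 := by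
          intro σ
          have := sgn_sq (σ j); have := sgn_sq (τ j); nlinarith
        simp only [this, Finset.sum_const, Finset.card_univ, Fintype.card_fun,
          Fintype.card_bool, Fintype.card_fin]
        simp
      · simp only [hji, if_false]
        have : ∀ σ : Fin k → Bool, (sgn (σ i) * sgn (τ i)) * (sgn (σ j) * sgn (τ j))
            = (sgn (τ i) * sgn (τ j)) * (sgn (σ i) * sgn (σ j)) := by intro σ; ring
        simp only [this]
        rw [← Finset.mul_sum, sum_sgn_pair i j (fun h => hji h.symm), mul_zero]
    simp [hterm]
  simp [this]

theorem stmt13 (k : ℕ) (hk : 2 ≤ k) (σ₀ : Fin k → Bool)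
    (H H' : ℝ → ℝ)
    (hH : ∀ q, H q = ∑ σ : Fin k → Bool, Real.exp (q * (sdot σ σ₀) ^ 2))
    (hH' : ∀ q, H' q = ∑ σ : Fin k → Bool, (sdot σ σ₀) ^ 2 * Real.exp (q * (sdot σ σ₀) ^ 2)) :
    (∀ q : ℝ, 0 ≤ q → (k : ℝ) ≤ H' q / H q ∧ H' q / H q ≤ (k : ℝ) ^ 2) ∧
      Filter.Tendsto (fun q => H' q / H q) Filter.atTop (nhds ((k : ℝ) ^ 2)) := by
  set D : (Fin k → Bool) → ℝ := fun σ => (sdot σ σ₀) ^ 2 with hD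
  have hDnn : ∀ σ, 0 ≤ D σ := fun σ => sq_nonneg _
  have hDle : ∀ σ, D σ ≤ (k : ℝ) ^ 2 := fun σ => sdot_sq_le σ σ₀
  have hD0 : D σ₀ = (k : ℝ) ^ 2 := by rw [hD]; simp [sdot_self]
  have hHpos : ∀ q, 0 < H q := by
    intro q
    rw [hH]
    exact Finset.sum_pos (fun σ _ => Real.exp_pos _) ⟨σ₀, Finset.mem_univ _⟩
  have hHlb : ∀ q, Real.exp (q * (k : ℝ) ^ 2) ≤ H q := by
    intro q
    rw [hH]
    have := Finset.single_le_sum (f := fun σ => Real.exp (q * D σ))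
      (fun σ _ => le_of_lt (Real.exp_pos _)) (Finset.mem_univ σ₀)
    simpa [hD0] using this
  -- upper bound
  have hub : ∀ q, H' q ≤ (k : ℝ) ^ 2 * H q := by
    intro q
    rw [hH, hH', Finset.mul_sum]
    apply Finset.sum_le_sum
    intro σ _
    exact mul_le_mul_of_nonneg_right (hDle σ) (le_of_lt (Real.exp_pos _))
  -- lower bound via Chebyshev
  have hlb : ∀ q, 0 ≤ q → (k : ℝ) * H q ≤ H' q := by
    intro q hq
    have mono : MonovaryOn D (fun σ => Real.exp (q * D σ)) (Finset.univ : Finset (Fin k → Bool)) := by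
      intro i _ j _ hlt
      have h1 : q * D i < q * D j := Real.exp_lt_exp.mp hlt
      by_contra hcon
      push_neg at hcon
      nlinarith
    have cheb := mono.sum_mul_sum_le_card_mul_sum
    have hsum : ∑ σ : Fin k → Bool, D σ = (k : ℝ) * 2 ^ k := sum_sdot_sq σ₀
    rw [hsum] at cheb
    have hcard : (#(Finset.univ : Finset (Fin k → Bool)) : ℝ) = 2 ^ k := by
      simp
    rw [hcard] at cheb
    have h2pos : (0 : ℝ) < 2 ^ k := by positivity
    rw [hH, hH']
    have cheb' : (2:ℝ) ^ k * ((k : ℝ) * ∑ σ : Fin k → Bool, Real.exp (q * D σ))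
        ≤ (2:ℝ) ^ k * ∑ σ : Fin k → Bool, D σ * Real.exp (q * D σ) := by
      linear_combination cheb
    exact le_of_mul_le_mul_left cheb' h2pos
  constructor
  · intro q hq
    constructor
    · rw [le_div_iff₀ (hHpos q)]
      exact hlb q hq
    · rw [div_le_iff₀ (hHpos q)]
      calc H' q ≤ (k : ℝ) ^ 2 * H q := hub q
        _ = (k : ℝ) ^ 2 * H q := rfl
  · -- limit
    have key : ∀ q : ℝ, (k : ℝ) ^ 2 - H' q / H q
        ≤ ∑ σ : Fin k → Bool, ((k : ℝ) ^ 2 - D σ) * Real.exp (q * (D σ - (k : ℝ) ^ 2)) := by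
      intro q
      have hG : (k : ℝ) ^ 2 * H q - H' q
          = ∑ σ : Fin k → Bool, ((k : ℝ) ^ 2 - D σ) * Real.exp (q * D σ) := by
        rw [hH, hH', Finset.mul_sum, ← Finset.sum_sub_distrib]
        congr 1; funext σ; ring
      have hGnn : 0 ≤ (k : ℝ) ^ 2 * H q - H' q := by
        rw [hG]
        exact Finset.sum_nonneg fun σ _ => mul_nonneg (by linarith [hDle σ]) (le_of_lt (Real.exp_pos _))
      have step1 : (k : ℝ) ^ 2 - H' q / H q = ((k : ℝ) ^ 2 * H q - H' q) / H q := by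
        rw [eq_div_iff (ne_of_gt (hHpos q)), sub_mul,
          div_mul_cancel₀ _ (ne_of_gt (hHpos q))]
      rw [step1]
      have step2 : ((k : ℝ) ^ 2 * H q - H' q) / H q
          ≤ ((k : ℝ) ^ 2 * H q - H' q) / Real.exp (q * (k : ℝ) ^ 2) :=
        div_le_div_of_nonneg_left hGnn (Real.exp_pos _) (hHlb q)
      refine step2.trans (le_of_eq ?_)
      rw [hG, Finset.sum_div]
      congr 1; funext σ
      rw [mul_div_assoc, ← Real.exp_sub]
      congr 2
      ring
    have hsumto : Filter.Tendsto
        (fun q => ∑ σ : Fin k → Bool, ((k : ℝ) ^ 2 - D σ) * Real.exp (q * (D σ - (k : ℝ) ^ 2)))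
        Filter.atTop (nhds 0) := by
      have : (0 : ℝ) = ∑ σ : Fin k → Bool, 0 := by simp
      rw [this]
      apply tendsto_finset_sum
      intro σ _
      rcases eq_or_lt_of_le (hDle σ) with heq | hlt
      · have hfun : (fun q : ℝ => ((k : ℝ) ^ 2 - D σ) * Real.exp (q * (D σ - (k : ℝ) ^ 2)))
            = fun _ => (0 : ℝ) := by
          funext q; rw [heq]; ring_nf
        rw [hfun]; exact tendsto_const_nhds
      · have hneg : D σ - (k : ℝ) ^ 2 < 0 := by linarith
        have h1 : Filter.Tendsto (fun q : ℝ => q * (D σ - (k : ℝ) ^ 2)) Filter.atTop Filter.atBot :=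
          Filter.Tendsto.atTop_mul_const_of_neg hneg Filter.tendsto_id
        have h2 : Filter.Tendsto (fun q : ℝ => Real.exp (q * (D σ - (k : ℝ) ^ 2)))
            Filter.atTop (nhds 0) := Real.tendsto_exp_atBot.comp h1
        have := h2.const_mul ((k : ℝ) ^ 2 - D σ)
        simpa using this
    have hsq : Filter.Tendsto (fun q => (k : ℝ) ^ 2 - H' q / H q) Filter.atTop (nhds 0) := by
      apply squeeze_zero
      · intro q
        have := hub q
        have hp := hHpos q
        have : H' q / H q ≤ (k : ℝ) ^ 2 := by
          rw [div_le_iff₀ hp]; calc H' q ≤ (k:ℝ)^2 * H q := hub q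
            _ = _ := rfl
        linarith
      · exact key
      · exact hsumto
    have := hsq.const_sub ((k : ℝ) ^ 2)
    simpa using this
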